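/- Define the potential Φ by Φ(⟨⟩) = 0 and Φ(⟨t,a,u⟩) = Φ(t) + p(t,u) + Φ(u), where p(t,u) = max(log_β(β·s(u)/(s(t)+s(u))), 0), β = φ^(φ+2), α = φ^(2φ−1), and φ = (√5+1)/2 is the golden ratio. Then for all weight-biased leftist heaps x and y, the amortized merge cost satisfies A(x,y) = T(x,y) + Φ(x∪y) − Φ(x) − Φ(y) ≤ log_α s(x∪y) + log_β s(x) + log_β s(y). -/

import Mathlib

inductive BTree (α : Type) : Type
  | nil : BTree α
  | node : BTree α → α → BTree α → BTree α

namespace BTree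

variable {α : Type} [LinearOrder α]

/-- number of nodes -/
def size : BTree α → ℕ
  | nil => 0
  | node t _ u => size t + size u + 1

/-- size plus one -/
def s (x : BTree α) : ℕ := size x + 1

def rank : BTree α → ℕ
  | nil => 0
  | node _ _ u => rank u + 1

/-- minor rank -/
def prank : BTree α → ℕ
  | nil => 0
  | node t _ _ => rank t + 1

/-- `a` is less than or equal to every label of the tree -/
def LeAll (a : α) : BTree α → Prop
  | nil => True
  | node t b u => a ≤ b ∧ LeAll a t ∧ LeAll a u

/-- heap property: every node's label is ≤ all labels in its subtrees -/
def IsHeap : BTree α → Prop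
  | nil => True
  | node t a u => LeAll a t ∧ LeAll a u ∧ IsHeap t ∧ IsHeap u

/-- rank-biased leftist property -/
def RankLeftist : BTree α → Prop
  | nil => True
  | node t _ u => rank u ≤ rank t ∧ RankLeftist t ∧ RankLeftist u

/-- weight-biased leftist property -/
def WeightLeftist : BTree α → Prop
  | nil => True
  | node t _ u => size u ≤ size t ∧ WeightLeftist t ∧ WeightLeftist u

/-- rank-biased balancing -/
def balR : BTree α → BTree α
  | nil => nil
  | node t a u => if rank u < rank t then node t a u else node u a t

/-- weight-biased balancing -/
def balW : BTree α → BTree α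
  | nil => nil
  | node t a u => if size u < size t then node t a u else node u a t

/-- rank-biased merge -/
def mergeR : BTree α → BTree α → BTree α
  | nil, nil => nil
  | nil, node v b w => balR (node v b (mergeR nil w))
  | node t a u, nil => balR (node t a (mergeR u nil))
  | node t a u, node v b w =>
      if a ≤ b then balR (node t a (mergeR u (node v b w)))
      else balR (node v b (mergeR (node t a u) w))
termination_by x y => rank x + rank y
decreasing_by all_goals simp [rank]

/-- weight-biased merge -/
def mergeW : BTree α → BTree α → BTree α
  | nil, nil => nil
  | nil, node v b w => balW (node v b (mergeW nil w))
  | node t a u, nil => balW (node t a (mergeW u nil))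
  | node t a u, node v b w =>
      if a ≤ b then balW (node t a (mergeW u (node v b w)))
      else balW (node v b (mergeW (node t a u) w))
termination_by x y => rank x + rank y
decreasing_by all_goals simp [rank]

/-- number of comparisons used when merging (independent of the balancing strategy) -/
def cost : BTree α → BTree α → ℕ
  | nil, nil => 0
  | nil, node _ _ w => cost nil w + 1
  | node _ _ u, nil => cost u nil + 1
  | node t a u, node v b w =>
      (if a ≤ b then cost u (node v b w) else cost (node t a u) w) + 1
termination_by x y => rank x + rank y
decreasing_by all_goals simp [rank]

end BTree

/-- the golden ratio φ = (√5 + 1)/2 -/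
noncomputable def goldPhi : ℝ := (Real.sqrt 5 + 1) / 2

/-- β = φ^(φ+2) -/
noncomputable def goldBeta : ℝ := goldPhi ^ (goldPhi + 2)

/-- α = φ^(2φ-1) -/
noncomputable def goldAlpha : ℝ := goldPhi ^ (2 * goldPhi - 1)

namespace BTree

variable {α : Type} [LinearOrder α]

/-- p(t,u) = max(log_β (β·s(u)/(s(t)+s(u))), 0) -/
noncomputable def p (t u : BTree α) : ℝ :=
  max (Real.logb goldBeta (goldBeta * (s u : ℝ) / ((s t : ℝ) + (s u : ℝ)))) 0

/-- the potential function Φ(⟨⟩) = 0, Φ(⟨t,a,u⟩) = Φ(t) + p(t,u) + Φ(u) -/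
noncomputable def Phi : BTree α → ℝ
  | nil => 0
  | node t _ u => Phi t + p t u + Phi u

end BTree

set_option linter.unusedSectionVars false

lemma phi_gt_one : 1 < goldPhi := by
  unfold goldPhi
  nlinarith [Real.sq_sqrt (show (0:ℝ) ≤ 5 by norm_num), Real.sqrt_nonneg 5]

lemma phi_pos : 0 < goldPhi := lt_trans one_pos phi_gt_one

lemma phi_sq : goldPhi ^ 2 = goldPhi + 1 := by
  unfold goldPhi
  nlinarith [Real.sq_sqrt (show (0:ℝ) ≤ 5 by norm_num)]

lemma logphi_pos : 0 < Real.log goldPhi := Real.log_pos phi_gt_one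

lemma log_beta_eq : Real.log goldBeta = (goldPhi + 2) * Real.log goldPhi :=
  Real.log_rpow phi_pos _

lemma log_alpha_eq : Real.log goldAlpha = (2 * goldPhi - 1) * Real.log goldPhi :=
  Real.log_rpow phi_pos _

lemma log_beta_pos : 0 < Real.log goldBeta := by
  rw [log_beta_eq]; have := phi_gt_one; have := logphi_pos; nlinarith

lemma log_alpha_pos : 0 < Real.log goldAlpha := by
  rw [log_alpha_eq]; have := phi_gt_one; have := logphi_pos; nlinarith

lemma beta_pos : 0 < goldBeta := Real.rpow_pos_of_pos phi_pos _
lemma alpha_pos : 0 < goldAlpha := Real.rpow_pos_of_pos phi_pos _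

lemma beta_gt_one : 1 < goldBeta :=
  (Real.one_lt_rpow_iff_of_pos phi_pos).mpr (Or.inl ⟨phi_gt_one, by linarith [phi_gt_one]⟩)

lemma alpha_gt_one : 1 < goldAlpha :=
  (Real.one_lt_rpow_iff_of_pos phi_pos).mpr (Or.inl ⟨phi_gt_one, by linarith [phi_gt_one]⟩)

lemma tangent_sum {u : ℝ} (hu0 : 0 < u) (hu1 : u < 1) :
    1 + Real.log (1 - u) / Real.log goldBeta + Real.log u / Real.log goldAlpha ≤ 0 := by
  have hL : 0 < Real.log goldPhi := logphi_pos
  have hp := phi_pos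
  have hp1 := phi_gt_one
  have t1 : Real.log u ≤ goldPhi * u - 1 - Real.log goldPhi := by
    have h := Real.log_le_sub_one_of_pos (mul_pos phi_pos hu0)
    rw [Real.log_mul (ne_of_gt phi_pos) (ne_of_gt hu0)] at h
    linarith
  have t2 : Real.log (1 - u) ≤ goldPhi ^ 2 * (1 - u) - 1 - 2 * Real.log goldPhi := by
    have h := Real.log_le_sub_one_of_pos (mul_pos (pow_pos phi_pos 2) (by linarith : (0:ℝ) < 1 - u))
    rw [Real.log_mul (by positivity) (by linarith : (1:ℝ) - u ≠ 0), Real.log_pow] at h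
    push_cast at h
    linarith
  rw [log_beta_eq, log_alpha_eq]
  have hb : 0 < (goldPhi + 2) * Real.log goldPhi := by nlinarith
  have ha : 0 < (2 * goldPhi - 1) * Real.log goldPhi := by nlinarith
  have e1 := (div_le_div_iff_of_pos_right hb).mpr t2
  have e2 := (div_le_div_iff_of_pos_right ha).mpr t1
  have key : 1 + (goldPhi ^ 2 * (1 - u) - 1 - 2 * Real.log goldPhi) / ((goldPhi + 2) * Real.log goldPhi)
      + (goldPhi * u - 1 - Real.log goldPhi) / ((2 * goldPhi - 1) * Real.log goldPhi) = 0 := by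
    have h2 : goldPhi + 2 ≠ 0 := by linarith
    have h3 : 2 * goldPhi - 1 ≠ 0 := by linarith
    rw [add_assoc, div_add_div _ _ hb.ne' ha.ne', one_add_div (mul_ne_zero hb.ne' ha.ne'), div_eq_zero_iff]; left
    linear_combination (Real.log goldPhi * (2*(1-u)*goldPhi + 1 + 2*Real.log goldPhi)) * phi_sq
  linarith

lemma key_ineq (c d : ℝ) (hc : 1 ≤ c) (hd : 1 ≤ d) :
    max (Real.logb goldBeta (goldBeta * min c d / (c + d))) 0
      ≤ Real.logb goldAlpha (c + d) - Real.logb goldAlpha d := by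
  have hc0 : 0 < c := lt_of_lt_of_le one_pos hc
  have hd0 : 0 < d := lt_of_lt_of_le one_pos hd
  have hn : 0 < c + d := by linarith
  have h0 : (0:ℝ) ≤ Real.logb goldAlpha (c + d) - Real.logb goldAlpha d :=
    sub_nonneg.mpr (Real.logb_le_logb_of_le alpha_gt_one hd0 (by linarith))
  refine max_le ?_ h0
  have hb := beta_pos
  have hmono : Real.logb goldBeta (goldBeta * min c d / (c + d))
      ≤ Real.logb goldBeta (goldBeta * c / (c + d)) := by
    apply Real.logb_le_logb_of_le beta_gt_one
    · positivity
    · gcongr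
      exact min_le_left c d
  refine le_trans hmono ?_
  -- rewrite left side
  have e1 : goldBeta * c / (c + d) = goldBeta * (c / (c + d)) := mul_div_assoc _ _ _
  unfold Real.logb
  rw [e1, Real.log_mul (ne_of_gt beta_pos) (ne_of_gt (div_pos hc0 hn)), add_div,
    div_self (ne_of_gt log_beta_pos)]
  have hts := tangent_sum (u := d / (c + d)) (div_pos hd0 hn) ((div_lt_one hn).mpr (by linarith))
  have h1u : 1 - d / (c + d) = c / (c + d) := by field_simp; ring
  rw [h1u, Real.log_div (ne_of_gt hc0) (ne_of_gt hn), Real.log_div (ne_of_gt hd0) (ne_of_gt hn)] at hts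
  have hswap : Real.log (c + d) - Real.log d = -(Real.log d - Real.log (c + d)) := by ring
  rw [Real.log_div (ne_of_gt hc0) (ne_of_gt hn), div_sub_div_same, hswap, neg_div]
  linarith [hts]


namespace BTree

variable {α : Type} [LinearOrder α]

lemma one_le_s (x : BTree α) : (1:ℝ) ≤ (s x : ℝ) := by
  exact_mod_cast Nat.one_le_iff_ne_zero.mpr (by simp [s])

lemma s_node_cast (t : BTree α) (a : α) (u : BTree α) :
    ((s (node t a u) : ℝ)) = (s t : ℝ) + (s u : ℝ) := by
  simp [s, size]; push_cast; ring

lemma s_bal (t : BTree α) (a : α) (u : BTree α) :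
    s (balW (node t a u)) = s t + s u := by
  simp only [balW]
  split <;> simp [s, size] <;> omega

lemma p_lower (t u : BTree α) :
    1 + Real.logb goldBeta (s u) - Real.logb goldBeta ((s t : ℝ) + (s u : ℝ)) ≤ p t u := by
  refine le_trans (le_of_eq ?_) (le_max_left _ _)
  have h1 : (0:ℝ) < (s u : ℝ) := lt_of_lt_of_le one_pos (one_le_s u)
  have h2 : (0:ℝ) < (s t : ℝ) + (s u : ℝ) := by have := one_le_s t; linarith
  rw [mul_div_assoc, Real.logb_mul (ne_of_gt beta_pos) (ne_of_gt (div_pos h1 h2)),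
    Real.logb_div (ne_of_gt h1) (ne_of_gt h2), Real.logb_self_eq_one beta_gt_one]
  ring

lemma phi_bal (t : BTree α) (a : α) (M : BTree α) :
    Phi (balW (node t a M)) ≤ Phi t + Phi M +
      (Real.logb goldAlpha ((s t : ℝ) + (s M : ℝ)) - Real.logb goldAlpha (s M)) := by
  have hst := one_le_s t
  have hsM := one_le_s M
  simp only [balW]
  split
  · rename_i h
    have hmin : min ((s t : ℝ)) ((s M : ℝ)) = (s M : ℝ) := by
      have : s M ≤ s t := by simp only [s]; omega
      exact min_eq_right (by exact_mod_cast this)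
    have := key_ineq (s t) (s M) hst hsM
    rw [hmin] at this
    simp only [Phi, p]
    linarith
  · rename_i h
    push_neg at h
    have hmin : min ((s t : ℝ)) ((s M : ℝ)) = (s t : ℝ) := by
      have : s t ≤ s M := by simp only [s]; omega
      exact min_eq_left (by exact_mod_cast this)
    have := key_ineq (s t) (s M) hst hsM
    rw [hmin] at this
    simp only [Phi, p]
    rw [show (s M : ℝ) + (s t : ℝ) = (s t : ℝ) + (s M : ℝ) from add_comm _ _]
    linarith

theorem amortized_aux (x y : BTree α) :
    (cost x y : ℝ) + Phi (mergeW x y) - Phi x - Phi y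
      ≤ Real.logb goldAlpha (s (mergeW x y)) + Real.logb goldBeta (s x)
        + Real.logb goldBeta (s y) := by
  have hnil : ((s (nil : BTree α)) : ℝ) = 1 := by norm_num [s, size]
  induction x, y using mergeW.induct with
  | case1 =>
      simp [cost, mergeW, Phi, s, size]
  | case2 v b w ih =>
      rw [show mergeW (nil : BTree α) (node v b w) = balW (node v b (mergeW nil w)) from by
        rw [mergeW]]
      rw [show cost (nil : BTree α) (node v b w) = cost (nil : BTree α) w + 1 from by rw [cost]]
      rw [s_bal]
      push_cast [s_node_cast] at ih ⊢
      simp only [hnil, Real.logb_one, Phi] at ih ⊢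
      linarith [phi_bal v b (mergeW (nil : BTree α) w), p_lower v w, ih]
  | case3 t a u ih =>
      rw [show mergeW (node t a u) (nil : BTree α) = balW (node t a (mergeW u nil)) from by
        rw [mergeW]]
      rw [show cost (node t a u) (nil : BTree α) = cost u (nil : BTree α) + 1 from by rw [cost]]
      rw [s_bal]
      push_cast [s_node_cast] at ih ⊢
      simp only [hnil, Real.logb_one, Phi] at ih ⊢
      linarith [phi_bal t a (mergeW u (nil : BTree α)), p_lower t u, ih]
  | case4 t a u v b w hab ih =>
      rw [show mergeW (node t a u) (node v b w) = balW (node t a (mergeW u (node v b w))) from by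
        rw [mergeW, if_pos hab]]
      rw [show cost (node t a u) (node v b w) = cost u (node v b w) + 1 from by
        rw [cost, if_pos hab]]
      rw [s_bal]
      push_cast [s_node_cast] at ih ⊢
      simp only [Phi] at ih ⊢
      linarith [phi_bal t a (mergeW u (node v b w)), p_lower t u, ih]
  | case5 t a u v b w hab ih =>
      rw [show mergeW (node t a u) (node v b w) = balW (node v b (mergeW (node t a u) w)) from by
        rw [mergeW, if_neg hab]]
      rw [show cost (node t a u) (node v b w) = cost (node t a u) w + 1 from by
        rw [cost, if_neg hab]]
      rw [s_bal]
      push_cast [s_node_cast] at ih ⊢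
      simp only [Phi] at ih ⊢
      linarith [phi_bal v b (mergeW (node t a u) w), p_lower v w, ih]

end BTree


/- For all weight-biased leftist heaps x and y, the amortized merge cost satisfies
A(x,y) = T(x,y) + Φ(x∪y) − Φ(x) − Φ(y) ≤ log_α s(x∪y) + log_β s(x) + log_β s(y). -/
open BTree in
theorem amortized_merge_weightBiased (α : Type) [LinearOrder α]
    (x y : BTree α) (hxh : IsHeap x) (hxl : WeightLeftist x)
    (hyh : IsHeap y) (hyl : WeightLeftist y) :
    (cost x y : ℝ) + Phi (mergeW x y) - Phi x - Phi y
      ≤ Real.logb goldAlpha (s (mergeW x y)) + Real.logb goldBeta (s x)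
        + Real.logb goldBeta (s y) := by
  exact amortized_aux x y
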